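/- For all real numbers β, x, T with 0 < β < 1 < T and x ≥ 0, one has 1/(β·x + e^{-T·x}) ≤ T/(β·ln(T/β)). -/
import Mathlib


theorem key_inequality (β x T : ℝ) (hβ0 : 0 < β) (hβ1 : β < 1) (hT : 1 < T)
    (hx : 0 ≤ x) :
    1 / (β * x + Real.exp (-T * x)) ≤ T / (β * Real.log (T / β)) := by
  set L := Real.log (T / β) with hLdef
  have hT0 : (0:ℝ) < T := lt_trans one_pos hT
  have hTβ : 1 < T / β := (one_lt_div hβ0).2 (hβ1.trans hT)
  have hL : 0 < L := Real.log_pos hTβ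
  have hexpL : Real.exp L = T / β := Real.exp_log (by positivity)
  have hsplit : Real.exp (L + -T * x) = (T / β) * Real.exp (-T * x) := by
    rw [Real.exp_add, hexpL]
  have hkey : 1 + (L + -T * x) ≤ Real.exp (L + -T * x) := by linarith [Real.add_one_le_exp (L + -T * x)]
  have hexp_pos : 0 < Real.exp (-T * x) := Real.exp_pos _
  have hden : 0 < β * x + Real.exp (-T * x) := by positivity
  rw [div_le_div_iff₀ hden (by positivity)]
  have h2 : β * (1 + L + -T * x) ≤ T * Real.exp (-T * x) := by
    have := hkey
    rw [hsplit] at this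
    have h3 : β * (1 + (L + -T * x)) ≤ β * ((T / β) * Real.exp (-T * x)) :=
      mul_le_mul_of_nonneg_left this hβ0.le
    have h4 : β * ((T / β) * Real.exp (-T * x)) = T * Real.exp (-T * x) := by
      field_simp
    linarith [h3]
  nlinarith [h2, hβ0.le, hL.le]
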